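/- Let 0 ≤ S < T < ∞, d, d₁ ∈ ℕ and m, n ∈ ℕ₀. (i) For k₁ ∈ V_{m+1}(S,T;ℝ^{d×d}) and k₂ ∈ V_{n+1}(S,T;ℝ^{d×d}), the ▷-product k₁ ▷ k₂ belongs to V_{m+n+1}(S,T;ℝ^{d×d}) and ⦀k₁ ▷ k₂⦀_{V_{m+n+1}} ≤ ⦀k₁⦀_{V_{m+1}} · ⦀k₂⦀_{V_{n+1}}. (ii) For k ∈ V_{m+1}(S,T;ℝ^{d×d}) and f ∈ L²(Δ_{n+1}(S,T);ℝ^{d×d₁}), the ▷-product k ▷ f belongs to L²(Δ_{m+n+1}(S,T);ℝ^{d×d₁}) and ‖k ▷ f‖_{L²(Δ_{m+n+1}(S,T))} ≤ ⦀k⦀_{V_{m+1}} · ‖f‖_{L²(Δ_{n+1}(S,T))}. -/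

import Mathlib

open MeasureTheory
open scoped ENNReal

noncomputable section

/-- Frobenius norm of a real matrix. -/
def frobNorm {m n : ℕ} (A : Matrix (Fin m) (Fin n) ℝ) : ℝ :=
  Real.sqrt (∑ i, ∑ j, (A i j) ^ 2)

/-- Operator norm of a real matrix with respect to the Euclidean norms. -/
def opNorm {m n : ℕ} (A : Matrix (Fin m) (Fin n) ℝ) : ℝ :=
  ‖LinearMap.toContinuousLinearMap (Matrix.toEuclideanLin A)‖

/-- The open simplex `Δ_n(S,T) = {(t₁,…,t_n) : T > t₁ > ⋯ > t_n > S}`. -/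
def simplex (S T : ℝ) (n : ℕ) : Set (Fin n → ℝ) :=
  {t | (∀ i, t i ∈ Set.Ioo S T) ∧ ∀ i j : Fin n, i < j → t j < t i}

/-- The open cube `(0,c)ⁿ`. -/
def cubeSet (c : ℝ) (n : ℕ) : Set (Fin n → ℝ) :=
  {x | ∀ i, x i ∈ Set.Ioo 0 c}

/-- Entrywise measurability of a matrix-valued kernel. -/
def MMeasurable {d₁ d₂ n : ℕ} (f : (Fin n → ℝ) → Matrix (Fin d₁) (Fin d₂) ℝ) : Prop :=
  ∀ p q, Measurable fun t => f t p q

/-- Square of the L² norm (Frobenius norm) over the simplex, as an extended real. -/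
def l2sqE {d₁ d₂ : ℕ} (S T : ℝ) {n : ℕ}
    (f : (Fin n → ℝ) → Matrix (Fin d₁) (Fin d₂) ℝ) : ℝ≥0∞ :=
  ∫⁻ t in simplex S T n, ENNReal.ofReal (frobNorm (f t) ^ 2)

/-- L² norm over the simplex. -/
def l2Norm {d₁ d₂ : ℕ} (S T : ℝ) {n : ℕ}
    (f : (Fin n → ℝ) → Matrix (Fin d₁) (Fin d₂) ℝ) : ℝ :=
  ((l2sqE S T f) ^ (1/2 : ℝ)).toReal

/-- Membership in `L²(Δ_n(S,T))`. -/
def MemL2 {d₁ d₂ : ℕ} (S T : ℝ) {n : ℕ}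
    (f : (Fin n → ℝ) → Matrix (Fin d₁) (Fin d₂) ℝ) : Prop :=
  MMeasurable f ∧ l2sqE S T f < ⊤

/-- The Volterra norm `⦀k⦀_{V_{n+1}(S,T)}` as an extended real:
ess sup over `t ∈ (S,T)` of the L²(op-norm) over `Δ_n(t,T)` of `k(·,t)`. -/
def vNormE {d : ℕ} (S T : ℝ) {n : ℕ}
    (k : (Fin (n+1) → ℝ) → Matrix (Fin d) (Fin d) ℝ) : ℝ≥0∞ :=
  essSup
    (fun t : ℝ =>
      (∫⁻ s in simplex t T n, ENNReal.ofReal (opNorm (k (Fin.snoc s t)) ^ 2)) ^ (1/2 : ℝ))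
    (volume.restrict (Set.Ioo S T))

def vNorm {d : ℕ} (S T : ℝ) {n : ℕ}
    (k : (Fin (n+1) → ℝ) → Matrix (Fin d) (Fin d) ℝ) : ℝ :=
  (vNormE S T k).toReal

/-- Membership in `V_{n+1}(S,T;ℝ^{d×d})`. -/
def MemV {d : ℕ} (S T : ℝ) {n : ℕ}
    (k : (Fin (n+1) → ℝ) → Matrix (Fin d) (Fin d) ℝ) : Prop :=
  MMeasurable k ∧ vNormE S T k < ⊤

/-- The `▷`-product. -/
def trprod {d₁ d₂ d₃ m n : ℕ}
    (f : (Fin (m+1) → ℝ) → Matrix (Fin d₁) (Fin d₂) ℝ)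
    (g : (Fin (n+1) → ℝ) → Matrix (Fin d₂) (Fin d₃) ℝ) :
    (Fin (m+n+1) → ℝ) → Matrix (Fin d₁) (Fin d₃) ℝ :=
  fun t =>
    f (fun i => t ⟨i.1, by have := i.2; omega⟩) *
    g (fun i => t ⟨m + i.1, by have := i.2; omega⟩)

/-- Recasting the arity of a kernel along an equality of naturals. -/
def reindexKer {d₁ d₂ a b : ℕ} (h : a = b)
    (f : (Fin a → ℝ) → Matrix (Fin d₁) (Fin d₂) ℝ) :
    (Fin b → ℝ) → Matrix (Fin d₁) (Fin d₂) ℝ :=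
  fun t => f (fun i => t (Fin.cast h i))

/-- Coefficient sequences of ⋆-Volterra kernels. -/
abbrev KSeq (d : ℕ) := ∀ n : ℕ, (Fin (n+1) → ℝ) → Matrix (Fin d) (Fin d) ℝ
/-- Coefficient sequences of adapted L²-processes. -/
abbrev LSeq (d d₁ : ℕ) := ∀ n : ℕ, (Fin (n+1) → ℝ) → Matrix (Fin d) (Fin d₁) ℝ
/-- Coefficient sequences of ∗-Volterra kernels. -/
abbrev JSeq (d : ℕ) := ∀ n : ℕ, (Fin (n+2) → ℝ) → Matrix (Fin d) (Fin d) ℝ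

/-- The graded ⋆-product `(K ⋆ ξ)_n = Σ_{j≤n} K_{n-j} ▷ ξ_j`. -/
def starP {d d₁ : ℕ} (K : KSeq d) (ξ : LSeq d d₁) : LSeq d d₁ :=
  fun n => ∑ j : Fin (n+1),
    reindexKer (by have := j.2; omega) (trprod (K (n - j.1)) (ξ j.1))

def KNormE {d : ℕ} (S T : ℝ) (K : KSeq d) : ℝ≥0∞ := ∑' n, vNormE S T (K n)
def KNorm {d : ℕ} (S T : ℝ) (K : KSeq d) : ℝ := (KNormE S T K).toReal
/-- Membership in `K(S,T)` (the ⋆-Volterra kernels). -/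
def MemK {d : ℕ} (S T : ℝ) (K : KSeq d) : Prop :=
  (∀ n, MMeasurable (K n)) ∧ KNormE S T K < ⊤

def LsqE {d d₁ : ℕ} (S T : ℝ) (ξ : LSeq d d₁) : ℝ≥0∞ := ∑' n, l2sqE S T (ξ n)
def LNorm {d d₁ : ℕ} (S T : ℝ) (ξ : LSeq d d₁) : ℝ := ((LsqE S T ξ) ^ (1/2 : ℝ)).toReal
/-- Membership in `L^{d×d₁}(S,T)`. -/
def MemL {d d₁ : ℕ} (S T : ℝ) (ξ : LSeq d d₁) : Prop :=
  (∀ n, MMeasurable (ξ n)) ∧ LsqE S T ξ < ⊤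

/-- Equality in `L^{d×d₁}(S,T)` (and in `K(S,T)`): coefficientwise a.e. equality
on the corresponding simplices. -/
def LEq {d d₁ : ℕ} (S T : ℝ) (f g : LSeq d d₁) : Prop :=
  ∀ n : ℕ, f n =ᵐ[volume.restrict (simplex S T (n+1))] g n

/-- The `∗`-product of two multi-parameter kernels. -/
def astProd {d₁ d₂ d₃ a b : ℕ}
    (j : (Fin (a+2) → ℝ) → Matrix (Fin d₁) (Fin d₂) ℝ)
    (g : (Fin (b+2) → ℝ) → Matrix (Fin d₂) (Fin d₃) ℝ) :
    (Fin (a+b+2) → ℝ) → Matrix (Fin d₁) (Fin d₃) ℝ :=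
  fun t => Matrix.of fun p q =>
    ∫ s in Set.Ioo (t ⟨a+1, by omega⟩) (t ⟨a, by omega⟩),
      (j (Fin.snoc (fun i : Fin (a+1) => t ⟨i.1, by have := i.2; omega⟩) s) *
       g (Fin.cons s (fun i : Fin (b+1) => t ⟨a+1+i.1, by have := i.2; omega⟩))) p q

/-- The `∗`-product of a multi-parameter kernel with an L²-type kernel
(lower integration limit `S` when `b = 0`). -/
def astProdL {d₁ d₂ d₃ a b : ℕ} (S : ℝ)
    (j : (Fin (a+2) → ℝ) → Matrix (Fin d₁) (Fin d₂) ℝ)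
    (f : (Fin (b+1) → ℝ) → Matrix (Fin d₂) (Fin d₃) ℝ) :
    (Fin (a+b+1) → ℝ) → Matrix (Fin d₁) (Fin d₃) ℝ :=
  fun t => Matrix.of fun p q =>
    ∫ s in Set.Ioo (if h : 0 < b then t ⟨a+1, by omega⟩ else S) (t ⟨a, by omega⟩),
      (j (Fin.snoc (fun i : Fin (a+1) => t ⟨i.1, by have := i.2; omega⟩) s) *
       f (Fin.cons s (fun i : Fin b => t ⟨a+1+i.1, by have := i.2; omega⟩))) p q

def jNormE {d : ℕ} (S T : ℝ) {n : ℕ}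
    (Jn : (Fin (n+2) → ℝ) → Matrix (Fin d) (Fin d) ℝ) : ℝ≥0∞ :=
  (∫⁻ t in simplex S T (n+2), ENNReal.ofReal (opNorm (Jn t) ^ 2)) ^ (1/2 : ℝ)

def JNormE {d : ℕ} (S T : ℝ) (J : JSeq d) : ℝ≥0∞ := ∑' n, jNormE S T (J n)
def JNorm {d : ℕ} (S T : ℝ) (J : JSeq d) : ℝ := (JNormE S T J).toReal
/-- Membership in `J(S,T)` (the ∗-Volterra kernels). -/
def MemJ {d : ℕ} (S T : ℝ) (J : JSeq d) : Prop :=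
  (∀ n, MMeasurable (J n)) ∧ JNormE S T J < ⊤

/-- Equality in `J(S,T)`. -/
def JEq {d : ℕ} (S T : ℝ) (J J' : JSeq d) : Prop :=
  ∀ n : ℕ, J n =ᵐ[volume.restrict (simplex S T (n+2))] J' n

/-- Graded product `J(S,T) × J(S,T) → J(S,T)`. -/
def astP {d : ℕ} (J J' : JSeq d) : JSeq d :=
  fun n => ∑ k : Fin (n+1),
    reindexKer (by have := k.2; omega) (astProd (J (n - k.1)) (J' k.1))

/-- Graded product `J(S,T) × L(S,T) → L(S,T)` (also `J(S,T) × K(S,T) → K(S,T)`). -/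
def astPL {d d₁ : ℕ} (S : ℝ) (J : JSeq d) (ξ : LSeq d d₁) : LSeq d d₁ :=
  fun n => ∑ k : Fin (n+1),
    reindexKer (by have := k.2; omega) (astProdL S (J (n - k.1)) (ξ k.1))

/-- Graded product `K(S,T) × J(S,T) → J(S,T)`. -/
def starPJ {d : ℕ} (K : KSeq d) (J : JSeq d) : JSeq d :=
  fun n => ∑ k : Fin (n+1),
    reindexKer (by have := k.2; omega) (trprod (K (n - k.1)) (J k.1))

/-- The `k`-th term of the backward ⋆-product. -/
def bstarTerm {d d₁ : ℕ} (T : ℝ) (K : KSeq d) (ξ : LSeq d d₁) (n : ℕ)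
    (t : Fin (n+1) → ℝ) (k : ℕ) : Matrix (Fin d) (Fin d₁) ℝ :=
  if h : n ≤ k then
    Matrix.of fun p q =>
      ∫ s in simplex (t 0) T (k - n),
        (K (k - n) (Fin.snoc s (t 0)) *
         ξ k (fun i => Fin.append s t (Fin.cast (by omega) i))) p q
  else 0

/-- The backward ⋆-product. -/
def bstarP {d d₁ : ℕ} (T : ℝ) (K : KSeq d) (ξ : LSeq d d₁) : LSeq d d₁ :=
  fun n t => ∑' k : ℕ, bstarTerm T K ξ n t k

/-- The `k`-th term of the backward ∗-product. -/
def bastTerm {d d₁ : ℕ} (T : ℝ) (J : JSeq d) (ξ : LSeq d d₁) (n : ℕ)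
    (t : Fin (n+1) → ℝ) (k : ℕ) : Matrix (Fin d) (Fin d₁) ℝ :=
  if h : n ≤ k then
    Matrix.of fun p q =>
      ∫ s in simplex (t 0) T (k - n + 1),
        (J (k - n) (Fin.snoc s (t 0)) *
         ξ k (fun i => Fin.append s (fun m : Fin n => t m.succ) (Fin.cast (by omega) i))) p q
  else 0

/-- The backward ∗-product. -/
def bastP {d d₁ : ℕ} (T : ℝ) (J : JSeq d) (ξ : LSeq d d₁) : LSeq d d₁ :=
  fun n t => ∑' k : ℕ, bastTerm T J ξ n t k

/-- Coefficientwise matrix transpose. -/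
def transK {d : ℕ} (K : KSeq d) : KSeq d := fun n t => (K n t).transpose
/-- Coefficientwise matrix transpose. -/
def transJ {d : ℕ} (J : JSeq d) : JSeq d := fun n t => (J n t).transpose

/-- Inner product of `L^d(S,T)`. -/
def Linner {d : ℕ} (S T : ℝ) (φ ψ : LSeq d 1) : ℝ :=
  ∑' n, ∫ t in simplex S T (n+1), ∑ i, φ n t i 0 * ψ n t i 0

/-- `R` is the ⋆-resolvent of `K` on `(S,T)`. -/
def IsStarResolvent {d : ℕ} (S T : ℝ) (K R : KSeq d) : Prop :=
  MemK S T R ∧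
  LEq S T R (fun n t => K n t + starP K R n t) ∧
  LEq S T R (fun n t => K n t + starP R K n t)

/-- `Q` is the ∗-resolvent of `J` on `(S,T)`. -/
def IsAstResolvent {d : ℕ} (S T : ℝ) (J Q : JSeq d) : Prop :=
  MemJ S T Q ∧
  JEq S T Q (fun n t => J n t + astP J Q n t) ∧
  JEq S T Q (fun n t => J n t + astP Q J n t)

/-- `(Q,R)` is the `(∗,⋆)`-resolvent of `(J,K)` on `(S,T)`. -/
def IsAstStarResolvent {d : ℕ} (S T : ℝ) (J : JSeq d) (K : KSeq d)
    (Q : JSeq d) (R : KSeq d) : Prop :=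
  MemJ S T Q ∧ MemK S T R ∧
  JEq S T Q (fun n t => J n t + astP J Q n t + starPJ K Q n t) ∧
  JEq S T Q (fun n t => J n t + astP Q J n t + starPJ R J n t) ∧
  LEq S T R (fun n t => K n t + astPL S J R n t + starP K R n t) ∧
  LEq S T R (fun n t => K n t + astPL S Q K n t + starP R K n t)

/-- The unit of `K(S,T)`: `(I_d, 0, 0, …)`. -/
def unitK (d : ℕ) : KSeq d := fun n =>
  match n with
  | 0 => fun _ => (1 : Matrix (Fin d) (Fin d) ℝ)
  | _ + 1 => fun _ => 0

/-- `starPow K m = K^{⋆(m+1)}`. -/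
def starPow {d : ℕ} (K : KSeq d) : ℕ → KSeq d
  | 0 => K
  | m + 1 => starP K (starPow K m)


-- ===== auxiliary lemmas =====

lemma opNorm_nonneg' {m n : ℕ} (A : Matrix (Fin m) (Fin n) ℝ) : 0 ≤ opNorm A := norm_nonneg _

lemma opNorm_apply_le' {m n : ℕ} (A : Matrix (Fin m) (Fin n) ℝ) (x : EuclideanSpace ℝ (Fin n)) :
    ‖Matrix.toEuclideanLin A x‖ ≤ opNorm A * ‖x‖ := by
  have := (LinearMap.toContinuousLinearMap (Matrix.toEuclideanLin A)).le_opNorm x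
  simpa [opNorm] using this

lemma opNorm_mul_le' {d₁ d₂ d₃ : ℕ} (A : Matrix (Fin d₁) (Fin d₂) ℝ)
    (B : Matrix (Fin d₂) (Fin d₃) ℝ) :
    opNorm (A * B) ≤ opNorm A * opNorm B := by
  rw [opNorm]
  apply ContinuousLinearMap.opNorm_le_bound _ (mul_nonneg (opNorm_nonneg' A) (opNorm_nonneg' B))
  intro x
  have h1 : Matrix.toEuclideanLin (A * B) x = Matrix.toEuclideanLin A (Matrix.toEuclideanLin B x) := by
    simp [Matrix.toEuclideanLin_apply, Matrix.mulVec_mulVec]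
  simp only [LinearMap.coe_toContinuousLinearMap', h1]
  calc ‖Matrix.toEuclideanLin A (Matrix.toEuclideanLin B x)‖
      ≤ opNorm A * ‖Matrix.toEuclideanLin B x‖ := opNorm_apply_le' _ _
    _ ≤ opNorm A * (opNorm B * ‖x‖) :=
        mul_le_mul_of_nonneg_left (opNorm_apply_le' _ _) (opNorm_nonneg' A)
    _ = opNorm A * opNorm B * ‖x‖ := by ring

lemma frobNorm_nonneg' {m n : ℕ} (A : Matrix (Fin m) (Fin n) ℝ) : 0 ≤ frobNorm A :=
  Real.sqrt_nonneg _

lemma frobNorm_sq' {m n : ℕ} (A : Matrix (Fin m) (Fin n) ℝ) :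
    frobNorm A ^ 2 = ∑ i, ∑ j, (A i j) ^ 2 := by
  rw [frobNorm, Real.sq_sqrt]; positivity

lemma euclid_norm_sq' {n : ℕ} (v : Fin n → ℝ) :
    ‖(WithLp.equiv 2 (Fin n → ℝ)).symm v‖ ^ 2 = ∑ i, (v i) ^ 2 := by
  rw [EuclideanSpace.norm_eq, Real.sq_sqrt (by positivity)]
  simp [sq_abs]

lemma frobNorm_mul_le' {d₁ d₂ d₃ : ℕ} (A : Matrix (Fin d₁) (Fin d₂) ℝ)
    (B : Matrix (Fin d₂) (Fin d₃) ℝ) :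
    frobNorm (A * B) ≤ opNorm A * frobNorm B := by
  have hsq : frobNorm (A * B) ^ 2 ≤ (opNorm A * frobNorm B) ^ 2 := by
    have lhs : frobNorm (A * B) ^ 2 = ∑ j, ∑ i, ((A * B) i j) ^ 2 := by
      rw [frobNorm_sq', Finset.sum_comm]
    have rhs : (opNorm A * frobNorm B) ^ 2 = ∑ j, opNorm A ^ 2 * ∑ i, (B i j) ^ 2 := by
      rw [mul_pow, frobNorm_sq', Finset.sum_comm, Finset.mul_sum]
    rw [lhs, rhs]
    apply Finset.sum_le_sum
    intro j _
    have hc : (fun i => (A * B) i j) = A.mulVec (fun r => B r j) := by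
      funext i; simp [Matrix.mul_apply, Matrix.mulVec, dotProduct]
    calc ∑ i, ((A * B) i j) ^ 2
        = ‖(WithLp.equiv 2 (Fin d₁ → ℝ)).symm (fun i => (A * B) i j)‖ ^ 2 :=
          (euclid_norm_sq' _).symm
      _ = ‖Matrix.toEuclideanLin A ((WithLp.equiv 2 (Fin d₂ → ℝ)).symm (fun r => B r j))‖ ^ 2 := by
          rw [WithLp.equiv_symm_apply, WithLp.equiv_symm_apply, Matrix.toEuclideanLin_apply_piLp_toLp, hc]
      _ ≤ (opNorm A * ‖(WithLp.equiv 2 (Fin d₂ → ℝ)).symm (fun r => B r j)‖) ^ 2 := by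
          apply pow_le_pow_left₀ (norm_nonneg _) (opNorm_apply_le' _ _)
      _ = opNorm A ^ 2 * ∑ i, (B i j) ^ 2 := by
          rw [mul_pow, euclid_norm_sq']
  exact (pow_le_pow_iff_left₀ (frobNorm_nonneg' _)
    (mul_nonneg (opNorm_nonneg' _) (frobNorm_nonneg' _)) two_ne_zero).mp hsq

lemma ofReal_opNorm_mul_sq_le {d₁ d₂ d₃ : ℕ} (A : Matrix (Fin d₁) (Fin d₂) ℝ)
    (B : Matrix (Fin d₂) (Fin d₃) ℝ) :
    ENNReal.ofReal (opNorm (A * B) ^ 2) ≤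
      ENNReal.ofReal (opNorm A ^ 2) * ENNReal.ofReal (opNorm B ^ 2) := by
  rw [← ENNReal.ofReal_mul (by positivity)]
  apply ENNReal.ofReal_le_ofReal
  calc opNorm (A * B) ^ 2 ≤ (opNorm A * opNorm B) ^ 2 :=
        pow_le_pow_left₀ (opNorm_nonneg' _) (opNorm_mul_le' A B) 2
    _ = opNorm A ^ 2 * opNorm B ^ 2 := mul_pow _ _ 2

lemma ofReal_frob_mul_sq_le {d₁ d₂ d₃ : ℕ} (A : Matrix (Fin d₁) (Fin d₂) ℝ)
    (B : Matrix (Fin d₂) (Fin d₃) ℝ) :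
    ENNReal.ofReal (frobNorm (A * B) ^ 2) ≤
      ENNReal.ofReal (opNorm A ^ 2) * ENNReal.ofReal (frobNorm B ^ 2) := by
  rw [← ENNReal.ofReal_mul (by positivity)]
  apply ENNReal.ofReal_le_ofReal
  calc frobNorm (A * B) ^ 2 ≤ (opNorm A * frobNorm B) ^ 2 :=
        pow_le_pow_left₀ (frobNorm_nonneg' _) (frobNorm_mul_le' A B) 2
    _ = opNorm A ^ 2 * frobNorm B ^ 2 := mul_pow _ _ 2

-- measurability of norms
def opLaux (d₁ d₂ : ℕ) : (Fin d₁ → Fin d₂ → ℝ) →ₗ[ℝ]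
    (EuclideanSpace ℝ (Fin d₂) →L[ℝ] EuclideanSpace ℝ (Fin d₁)) where
  toFun A := LinearMap.toContinuousLinearMap (Matrix.toEuclideanLin (Matrix.of A))
  map_add' A B := by
    ext x i
    simp [Matrix.toEuclideanLin_apply, Matrix.mulVec, dotProduct, add_mul,
      Finset.sum_add_distrib, WithLp.equiv_symm_apply]
  map_smul' c A := by
    ext x i
    simp [Matrix.toEuclideanLin_apply, Matrix.mulVec, dotProduct, Finset.mul_sum,
      mul_assoc, WithLp.equiv_symm_apply]

lemma measurable_opNorm_comp {d₁ d₂ : ℕ} {β : Type*} [MeasurableSpace β]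
    {k : β → Matrix (Fin d₁) (Fin d₂) ℝ}
    (hk : ∀ p q, Measurable fun t => k t p q) : Measurable fun t => opNorm (k t) := by
  have h1 : Measurable fun t => (fun p q => k t p q : Fin d₁ → Fin d₂ → ℝ) :=
    measurable_pi_lambda _ fun p => measurable_pi_lambda _ fun q => hk p q
  have h2 : Continuous fun A : Fin d₁ → Fin d₂ → ℝ => ‖opLaux d₁ d₂ A‖ :=
    continuous_norm.comp (LinearMap.continuous_of_finiteDimensional _)
  exact h2.measurable.comp h1

lemma measurable_frobNorm_comp {d₁ d₂ : ℕ} {β : Type*} [MeasurableSpace β]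
    {k : β → Matrix (Fin d₁) (Fin d₂) ℝ}
    (hk : ∀ p q, Measurable fun t => k t p q) : Measurable fun t => frobNorm (k t) := by
  unfold frobNorm
  apply Measurable.sqrt
  exact Finset.measurable_sum _ fun i _ => Finset.measurable_sum _ fun j _ => (hk i j).pow_const 2

-- simplex lemmas
lemma measurableSet_simplex {t T : ℝ} {n : ℕ} : MeasurableSet (simplex t T n) := by
  have h : simplex t T n = (⋂ i, (fun x : Fin n → ℝ => x i) ⁻¹' (Set.Ioo t T)) ∩
      (⋂ i, ⋂ j, ⋂ (_h : i < j), {x : Fin n → ℝ | x j < x i}) := by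
    ext x
    simp only [simplex, Set.mem_setOf_eq, Set.mem_inter_iff, Set.mem_iInter, Set.mem_preimage]
  rw [h]
  exact (MeasurableSet.iInter fun i => (measurable_pi_apply i) measurableSet_Ioo).inter
    (MeasurableSet.iInter fun i => MeasurableSet.iInter fun j => MeasurableSet.iInter fun _ =>
      measurableSet_lt (measurable_pi_apply j) (measurable_pi_apply i))

def lb {n : ℕ} (t : ℝ) (b : Fin n → ℝ) : ℝ := if h : 0 < n then b ⟨0, h⟩ else t

lemma snoc_apply_lt {α : Type*} {N : ℕ} (s : Fin N → α) (t : α) (i : Fin (N + 1))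
    (h : i.1 < N) : (Fin.snoc s t : Fin (N+1) → α) i = s ⟨i.1, h⟩ := by
  have : (Fin.snoc s t : Fin (N+1) → α) i
      = (Fin.snoc s t : Fin (N+1) → α) (Fin.castSucc ⟨i.1, h⟩) := by congr 1 <;> exact Fin.ext rfl
  rw [this, Fin.snoc_castSucc]

lemma snoc_apply_eq {α : Type*} {N : ℕ} (s : Fin N → α) (t : α) (i : Fin (N + 1))
    (h : i.1 = N) : (Fin.snoc s t : Fin (N+1) → α) i = t := by
  have : i = Fin.last N := Fin.ext h
  rw [this]
  all_goals rw [Fin.snoc_last]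

lemma append_apply_lt {α : Type*} {m n : ℕ} (a : Fin m → α) (b : Fin n → α)
    (i : Fin (m + n)) (h : i.1 < m) : Fin.append a b i = a ⟨i.1, h⟩ := by
  have : Fin.append a b i = Fin.append a b (Fin.castAdd n ⟨i.1, h⟩) := by
    congr 1 <;> exact Fin.ext rfl
  rw [this, Fin.append_left]

lemma append_apply_ge {α : Type*} {m n : ℕ} (a : Fin m → α) (b : Fin n → α)
    (i : Fin (m + n)) (h : m ≤ i.1) : Fin.append a b i = b ⟨i.1 - m, by omega⟩ := by
  have : Fin.append a b i = Fin.append a b (Fin.natAdd m ⟨i.1 - m, by omega⟩) := by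
    congr 1; exact Fin.ext (by simp only [Fin.coe_natAdd]; omega)
  rw [this, Fin.append_right]

lemma lb_ge {n : ℕ} {t T : ℝ} {b : Fin n → ℝ} (hb : b ∈ simplex t T n) : t ≤ lb t b := by
  unfold lb
  split
  · exact le_of_lt (hb.1 _).1
  · exact le_refl t

lemma append_mem_simplex {m n : ℕ} {t T : ℝ} (a : Fin m → ℝ) (b : Fin n → ℝ) :
    Fin.append a b ∈ simplex t T (m + n) ↔ b ∈ simplex t T n ∧ a ∈ simplex (lb t b) T m := by
  constructor
  · rintro ⟨h1, h2⟩
    refine ⟨⟨fun j => ?_, fun i j hij => ?_⟩, ⟨fun i => ?_, fun i j hij => ?_⟩⟩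
    · have := h1 (Fin.natAdd m j); rwa [Fin.append_right] at this
    · have hv : i.1 < j.1 := hij
      have := h2 (Fin.natAdd m i) (Fin.natAdd m j)
        (by rw [Fin.lt_def]; simp only [Fin.coe_natAdd]; omega)
      rwa [Fin.append_right, Fin.append_right] at this
    · constructor
      · unfold lb
        split
        · rename_i hn
          have := h2 (Fin.castAdd n i) (Fin.natAdd m ⟨0, hn⟩)
            (by rw [Fin.lt_def]; simp only [Fin.coe_natAdd, Fin.coe_castAdd]
                have := i.isLt; omega)
          rwa [Fin.append_left, Fin.append_right] at this
        · have := h1 (Fin.castAdd n i); rw [Fin.append_left] at this; exact this.1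
      · have := h1 (Fin.castAdd n i); rw [Fin.append_left] at this; exact this.2
    · have hv : i.1 < j.1 := hij
      have := h2 (Fin.castAdd n i) (Fin.castAdd n j)
        (by rw [Fin.lt_def]; simp only [Fin.coe_castAdd]; omega)
      rwa [Fin.append_left, Fin.append_left] at this
  · rintro ⟨hb, ha⟩
    have hlb : t ≤ lb t b := lb_ge hb
    constructor
    · intro i
      induction i using Fin.addCases with
      | left i =>
        rw [Fin.append_left]
        exact ⟨lt_of_le_of_lt hlb (ha.1 _).1, (ha.1 _).2⟩
      | right j =>
        rw [Fin.append_right]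
        exact hb.1 _
    · intro i j hij
      have hv : i.1 < j.1 := hij
      induction i using Fin.addCases with
      | left i =>
        induction j using Fin.addCases with
        | left j =>
          rw [Fin.append_left, Fin.append_left]
          refine ha.2 _ _ ?_
          rw [Fin.lt_def]
          simp only [Fin.coe_castAdd] at hv ⊢
          omega
        | right j' =>
          rw [Fin.append_left, Fin.append_right]
          have hn : 0 < n := j'.pos
          have h0 : b j' ≤ b ⟨0, hn⟩ := by
            rcases Nat.eq_zero_or_pos j'.1 with h | h
            · exact le_of_eq (by congr 1; exact Fin.ext (by simp [h]))
            · refine le_of_lt (hb.2 ⟨0, hn⟩ j' ?_)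
              rw [Fin.lt_def]
              exact h
          have h1 : b ⟨0, hn⟩ < a i := by
            have := (ha.1 i).1
            unfold lb at this
            rwa [dif_pos hn] at this
          exact lt_of_le_of_lt h0 h1
      | right i' =>
        induction j using Fin.addCases with
        | left j =>
          exfalso
          simp only [Fin.coe_natAdd, Fin.coe_castAdd] at hv
          have := j.isLt
          omega
        | right j' =>
          rw [Fin.append_right, Fin.append_right]
          refine hb.2 _ _ ?_
          rw [Fin.lt_def]
          simp only [Fin.coe_natAdd] at hv ⊢
          omega

def eAp (m n : ℕ) : ((Fin m → ℝ) × (Fin n → ℝ)) ≃ᵐ (Fin (m + n) → ℝ) :=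
  (MeasurableEquiv.sumPiEquivProdPi (fun _ : Fin m ⊕ Fin n => ℝ)).symm.trans
    (MeasurableEquiv.piCongrLeft (fun _ => ℝ) finSumFinEquiv)

lemma eAp_measurePreserving (m n : ℕ) : MeasurePreserving (eAp m n) volume volume := by
  have h1 := volume_measurePreserving_sumPiEquivProdPi_symm (fun _ : Fin m ⊕ Fin n => ℝ)
  have h2 := volume_measurePreserving_piCongrLeft (fun _ : Fin (m+n) => ℝ) finSumFinEquiv
  exact h2.comp h1

lemma eAp_apply (m n : ℕ) (a : Fin m → ℝ) (b : Fin n → ℝ) :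
    eAp m n (a, b) = Fin.append a b := by
  apply (eAp m n).symm.injective
  rw [MeasurableEquiv.symm_apply_apply]
  have : (eAp m n).symm (Fin.append a b)
      = MeasurableEquiv.sumPiEquivProdPi (fun _ : Fin m ⊕ Fin n => ℝ)
          ((MeasurableEquiv.piCongrLeft (fun _ => ℝ) finSumFinEquiv).symm (Fin.append a b)) := rfl
  rw [this]
  have hpc : ((MeasurableEquiv.piCongrLeft (fun _ : Fin (m+n) => ℝ) finSumFinEquiv).symm
      (Fin.append a b)) = fun i => Fin.append a b (finSumFinEquiv i) := by
    funext i
    rfl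
  rw [hpc]
  have hsp : MeasurableEquiv.sumPiEquivProdPi (fun _ : Fin m ⊕ Fin n => ℝ)
      (fun i => Fin.append a b (finSumFinEquiv i))
      = (fun i => Fin.append a b (finSumFinEquiv (Sum.inl i)),
         fun j => Fin.append a b (finSumFinEquiv (Sum.inr j))) := rfl
  rw [hsp]
  ext i
  · simp [finSumFinEquiv, Fin.append_left]
  · simp [finSumFinEquiv, Fin.append_right]

lemma lintegral_simplex_split (m n : ℕ) (t T : ℝ)
    (F : (Fin (m + n) → ℝ) → ℝ≥0∞) (hF : Measurable F) :
    ∫⁻ s in simplex t T (m + n), F s =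
      ∫⁻ b in simplex t T n, ∫⁻ a in simplex (lb t b) T m, F (Fin.append a b) := by
  have hmp := eAp_measurePreserving m n
  have hind : Measurable fun v => (simplex t T (m+n)).indicator F v :=
    hF.indicator measurableSet_simplex
  calc ∫⁻ s in simplex t T (m + n), F s
      = ∫⁻ s, (simplex t T (m+n)).indicator F s :=
        (lintegral_indicator measurableSet_simplex F).symm
    _ = ∫⁻ p, (simplex t T (m+n)).indicator F (eAp m n p) := (hmp.lintegral_comp hind).symm
    _ = ∫⁻ p, (simplex t T (m+n)).indicator F (eAp m n p)
          ∂((volume : Measure (Fin m → ℝ)).prod (volume : Measure (Fin n → ℝ))) := by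
        rw [← Measure.volume_eq_prod]
    _ = ∫⁻ b, ∫⁻ a, (simplex t T (m+n)).indicator F (eAp m n (a, b)) :=
        lintegral_prod_symm _ (hind.comp (eAp m n).measurable).aemeasurable
    _ = ∫⁻ b, (simplex t T n).indicator
          (fun b => ∫⁻ a in simplex (lb t b) T m, F (Fin.append a b)) b := by
        congr 1
        funext b
        by_cases hb : b ∈ simplex t T n
        · rw [Set.indicator_of_mem hb, ← lintegral_indicator measurableSet_simplex]
          congr 1
          funext a
          rw [eAp_apply]
          by_cases ha : a ∈ simplex (lb t b) T m
          · rw [Set.indicator_of_mem ((append_mem_simplex a b).2 ⟨hb, ha⟩),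
              Set.indicator_of_mem ha]
          · rw [Set.indicator_of_notMem (fun hc => ha ((append_mem_simplex a b).1 hc).2),
              Set.indicator_of_notMem ha]
        · rw [Set.indicator_of_notMem hb]
          have : ∀ a, (simplex t T (m+n)).indicator F (eAp m n (a, b)) = 0 := by
            intro a
            rw [eAp_apply]
            exact Set.indicator_of_notMem (fun hc => hb ((append_mem_simplex a b).1 hc).1) _
          simp [this]
    _ = ∫⁻ b in simplex t T n, ∫⁻ a in simplex (lb t b) T m, F (Fin.append a b) :=
        lintegral_indicator measurableSet_simplex _

lemma null_eval0 {n : ℕ} (hn : 0 < n) (t T : ℝ) {C : Set ℝ} (hC : volume C = 0) :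
    volume ({b : Fin n → ℝ | b ⟨0, hn⟩ ∈ C} ∩ simplex t T n) = 0 := by
  obtain ⟨C', hsub, hCm, hC0⟩ := exists_measurable_superset_of_null hC
  apply measure_mono_null (t := Set.pi Set.univ
    (fun i : Fin n => if i = ⟨0, hn⟩ then C' ∩ Set.Ioo t T else Set.Ioo t T))
  · rintro b ⟨hb0, hbs⟩ i _
    by_cases h : i = ⟨0, hn⟩
    · subst h
      simp only [if_pos rfl]
      exact ⟨hsub hb0, hbs.1 _⟩
    · simp only [if_neg h]
      exact hbs.1 _
  · rw [volume_pi_pi]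
    apply Finset.prod_eq_zero (Finset.mem_univ (⟨0, hn⟩ : Fin n))
    rw [if_pos rfl]
    exact measure_mono_null Set.inter_subset_left hC0
-- projections appearing in the ▷-product
def proj1 (m n : ℕ) (v : Fin (m+n+1) → ℝ) : Fin (m+1) → ℝ :=
  fun i => v ⟨i.1, by have := i.2; omega⟩
def proj2 (m n : ℕ) (v : Fin (m+n+1) → ℝ) : Fin (n+1) → ℝ :=
  fun i => v ⟨m + i.1, by have := i.2; omega⟩

lemma trprod_eq {d₁ d₂ d₃ m n : ℕ}
    (f : (Fin (m+1) → ℝ) → Matrix (Fin d₁) (Fin d₂) ℝ)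
    (g : (Fin (n+1) → ℝ) → Matrix (Fin d₂) (Fin d₃) ℝ) (t : Fin (m+n+1) → ℝ) :
    trprod f g t = f (proj1 m n t) * g (proj2 m n t) := rfl

lemma measurable_proj1 (m n : ℕ) : Measurable (proj1 m n) :=
  measurable_pi_lambda _ fun _ => measurable_pi_apply _

lemma measurable_proj2 (m n : ℕ) : Measurable (proj2 m n) :=
  measurable_pi_lambda _ fun _ => measurable_pi_apply _

lemma measurable_snoc_apply {N : ℕ} (t : ℝ) (j : Fin (N+1)) :
    Measurable fun s : Fin N → ℝ => (Fin.snoc s t : Fin (N+1) → ℝ) j := by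
  rcases lt_or_ge j.1 N with h | h
  · have he : (fun s : Fin N → ℝ => (Fin.snoc s t : Fin (N+1) → ℝ) j)
        = fun s => s ⟨j.1, h⟩ := by
      funext s; rw [snoc_apply_lt _ _ _ h]
    rw [he]; exact measurable_pi_apply _
  · have hj : j.1 = N := by have := j.2; omega
    have he : (fun s : Fin N → ℝ => (Fin.snoc s t : Fin (N+1) → ℝ) j) = fun _ => t := by
      funext s; rw [snoc_apply_eq _ _ _ hj]
    rw [he]; exact measurable_const

lemma measurable_snoc (N : ℕ) (t : ℝ) :
    Measurable fun s : Fin N → ℝ => (Fin.snoc s t : Fin (N+1) → ℝ) :=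
  measurable_pi_lambda _ fun j => measurable_snoc_apply t j

lemma snoc_apply_lt' {α : Type*} {N : ℕ} (s : Fin N → α) (t : α) {v : ℕ} (pf : v < N+1)
    (h : v < N) : (Fin.snoc s t : Fin (N+1) → α) ⟨v, pf⟩ = s ⟨v, h⟩ :=
  snoc_apply_lt s t ⟨v, pf⟩ h

lemma snoc_apply_eq' {α : Type*} {N : ℕ} (s : Fin N → α) (t : α) {v : ℕ} (pf : v < N+1)
    (h : v = N) : (Fin.snoc s t : Fin (N+1) → α) ⟨v, pf⟩ = t :=
  snoc_apply_eq s t ⟨v, pf⟩ h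

lemma append_apply_lt' {α : Type*} {m n : ℕ} (a : Fin m → α) (b : Fin n → α) {v : ℕ}
    (pf : v < m + n) (h : v < m) : Fin.append a b ⟨v, pf⟩ = a ⟨v, h⟩ :=
  append_apply_lt a b ⟨v, pf⟩ h

lemma append_apply_ge' {α : Type*} {m n : ℕ} (a : Fin m → α) (b : Fin n → α) {v : ℕ}
    (pf : v < m + n) (h : m ≤ v) : Fin.append a b ⟨v, pf⟩ = b ⟨v - m, by omega⟩ :=
  append_apply_ge a b ⟨v, pf⟩ h

lemma proj1_snoc_append {m n : ℕ} (t : ℝ) (a : Fin m → ℝ) (b : Fin n → ℝ) :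
    proj1 m n (Fin.snoc (Fin.append a b) t) = Fin.snoc a (lb t b) := by
  funext i
  simp only [proj1]
  rcases lt_or_ge i.1 m with h | h
  · rw [snoc_apply_lt' _ _ _ (by omega), append_apply_lt' _ _ _ h, snoc_apply_lt _ _ _ h]
  · have hm : i.1 = m := by have := i.2; omega
    rw [snoc_apply_eq a (lb t b) i hm]
    by_cases hn : 0 < n
    · rw [snoc_apply_lt' _ _ _ (by omega), append_apply_ge' _ _ _ h]
      unfold lb
      rw [dif_pos hn]
      congr 1
      exact Fin.ext (by simp [hm])
    · rw [snoc_apply_eq' _ _ _ (by omega)]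
      unfold lb
      rw [dif_neg hn]

lemma proj2_snoc_append {m n : ℕ} (t : ℝ) (a : Fin m → ℝ) (b : Fin n → ℝ) :
    proj2 m n (Fin.snoc (Fin.append a b) t) = Fin.snoc b t := by
  funext i
  simp only [proj2]
  rcases lt_or_ge i.1 n with h | h
  · rw [snoc_apply_lt' _ _ _ (by omega), append_apply_ge' _ _ _ (by omega),
      snoc_apply_lt _ _ _ h]
    congr 1
    exact Fin.ext (by simp)
  · have hn : i.1 = n := by have := i.2; omega
    rw [snoc_apply_eq b t i hn, snoc_apply_eq' _ _ _ (by omega)]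

lemma proj1_append {m n : ℕ} (S : ℝ) (a : Fin m → ℝ) (b : Fin (n+1) → ℝ) :
    proj1 m n (Fin.append a b : Fin (m+(n+1)) → ℝ) = Fin.snoc a (lb S b) := by
  funext i
  simp only [proj1]
  rcases lt_or_ge i.1 m with h | h
  · rw [append_apply_lt' _ _ _ h, snoc_apply_lt _ _ _ h]
  · have hm : i.1 = m := by have := i.2; omega
    rw [snoc_apply_eq a (lb S b) i hm, append_apply_ge' _ _ _ h]
    unfold lb
    rw [dif_pos (Nat.succ_pos n)]
    congr 1
    exact Fin.ext (by simp [hm])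

lemma proj2_append {m n : ℕ} (a : Fin m → ℝ) (b : Fin (n+1) → ℝ) :
    proj2 m n (Fin.append a b : Fin (m+(n+1)) → ℝ) = b := by
  funext i
  simp only [proj2]
  rw [append_apply_ge' _ _ _ (by omega)]
  congr 1
  exact Fin.ext (by simp)

lemma MMeasurable_trprod {d₁ d₂ d₃ m n : ℕ}
    {f : (Fin (m+1) → ℝ) → Matrix (Fin d₁) (Fin d₂) ℝ}
    {g : (Fin (n+1) → ℝ) → Matrix (Fin d₂) (Fin d₃) ℝ}
    (hf : MMeasurable f) (hg : MMeasurable g) : MMeasurable (trprod f g) := by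
  intro p q
  have he : (fun t => trprod f g t p q)
      = fun t => ∑ r, f (proj1 m n t) p r * g (proj2 m n t) r q := by
    funext t
    rw [trprod_eq, Matrix.mul_apply]
  rw [he]
  exact Finset.measurable_sum _ fun r _ =>
    ((hf p r).comp (measurable_proj1 m n)).mul ((hg r q).comp (measurable_proj2 m n))

-- ℝ≥0∞ power helpers
lemma sq_rpow_half (x : ℝ≥0∞) : (x ^ 2) ^ (1/2 : ℝ) = x := by
  rw [← ENNReal.rpow_natCast x 2, ← ENNReal.rpow_mul]
  norm_num

lemma rpow_half_le {x y : ℝ≥0∞} (h : x ^ (1/2 : ℝ) ≤ y) : x ≤ y ^ 2 := by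
  have hx : (x ^ (1/2 : ℝ)) ^ 2 = x := by
    rw [← ENNReal.rpow_natCast (x ^ (1/2:ℝ)) 2, ← ENNReal.rpow_mul]
    norm_num
  calc x = (x ^ (1/2:ℝ)) ^ 2 := hx.symm
    _ ≤ y ^ 2 := pow_le_pow_left' h 2

lemma le_rpow_half {x y : ℝ≥0∞} (h : x ≤ y ^ 2) : x ^ (1/2 : ℝ) ≤ y := by
  calc x ^ (1/2:ℝ) ≤ (y ^ 2) ^ (1/2:ℝ) := ENNReal.rpow_le_rpow h (by norm_num)
    _ = y := sq_rpow_half y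
set_option maxHeartbeats 1000000 in
lemma vNormE_trprod_le {d : ℕ} {m n : ℕ} (S T : ℝ)
    (k₁ : (Fin (m+1) → ℝ) → Matrix (Fin d) (Fin d) ℝ)
    (k₂ : (Fin (n+1) → ℝ) → Matrix (Fin d) (Fin d) ℝ)
    (hk₁ : MMeasurable k₁) (hk₂ : MMeasurable k₂) (hV₁ : vNormE S T k₁ ≠ ⊤) :
    vNormE S T (trprod k₁ k₂) ≤ vNormE S T k₁ * vNormE S T k₂ := by
  have hae1 : ∀ᵐ u ∂(volume.restrict (Set.Ioo S T)),
      (∫⁻ s in simplex u T m, ENNReal.ofReal (opNorm (k₁ (Fin.snoc s u)) ^ 2))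
        ≤ (vNormE S T k₁) ^ 2 := by
    filter_upwards [ENNReal.ae_le_essSup (μ := volume.restrict (Set.Ioo S T)) (fun u =>
      (∫⁻ s in simplex u T m, ENNReal.ofReal (opNorm (k₁ (Fin.snoc s u)) ^ 2)) ^ (1/2 : ℝ))]
      with u hu
    exact rpow_half_le hu
  have hae2 : ∀ᵐ u ∂(volume.restrict (Set.Ioo S T)),
      (∫⁻ s in simplex u T n, ENNReal.ofReal (opNorm (k₂ (Fin.snoc s u)) ^ 2))
        ≤ (vNormE S T k₂) ^ 2 := by
    filter_upwards [ENNReal.ae_le_essSup (μ := volume.restrict (Set.Ioo S T)) (fun u =>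
      (∫⁻ s in simplex u T n, ENNReal.ofReal (opNorm (k₂ (Fin.snoc s u)) ^ 2)) ^ (1/2 : ℝ))]
      with u hu
    exact rpow_half_le hu
  have hC : volume ({u : ℝ | ¬ (∫⁻ s in simplex u T m,
      ENNReal.ofReal (opNorm (k₁ (Fin.snoc s u)) ^ 2)) ≤ (vNormE S T k₁) ^ 2}
      ∩ Set.Ioo S T) = 0 := by
    have h0 := ae_iff.mp hae1
    rwa [Measure.restrict_apply' measurableSet_Ioo] at h0
  rw [vNormE]
  apply essSup_le_of_ae_le (hfbdd := by isBoundedDefault)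
  filter_upwards [hae1, hae2, ae_restrict_mem measurableSet_Ioo] with t h1 h2 ht
  apply le_rpow_half
  rw [mul_pow]
  -- measurability of the split integrand
  have hm1 : Measurable fun s : Fin (m+n) → ℝ =>
      ENNReal.ofReal (opNorm (k₁ (proj1 m n (Fin.snoc s t))) ^ 2) := by
    apply Measurable.ennreal_ofReal
    apply Measurable.pow_const
    exact measurable_opNorm_comp (fun p q =>
      (hk₁ p q).comp ((measurable_proj1 m n).comp (measurable_snoc (m+n) t)))
  have hm2 : Measurable fun s : Fin (m+n) → ℝ =>
      ENNReal.ofReal (opNorm (k₂ (proj2 m n (Fin.snoc s t))) ^ 2) := by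
    apply Measurable.ennreal_ofReal
    apply Measurable.pow_const
    exact measurable_opNorm_comp (fun p q =>
      (hk₂ p q).comp ((measurable_proj2 m n).comp (measurable_snoc (m+n) t)))
  have haeb : ∀ᵐ b ∂(volume.restrict (simplex t T n)),
      (∫⁻ a in simplex (lb t b) T m,
        ENNReal.ofReal (opNorm (k₁ (Fin.snoc a (lb t b))) ^ 2)) ≤ (vNormE S T k₁) ^ 2 := by
    by_cases hn : 0 < n
    · rw [ae_iff, Measure.restrict_apply' measurableSet_simplex]
      refine measure_mono_null ?_ (null_eval0 hn t T hC)
      rintro b ⟨hbb, hbs⟩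
      refine ⟨?_, hbs⟩
      have hlb : lb t b = b ⟨0, hn⟩ := dif_pos hn
      simp only [Set.mem_setOf_eq] at hbb
      rw [hlb] at hbb
      exact ⟨hbb, lt_trans ht.1 (hbs.1 _).1, (hbs.1 _).2⟩
    · apply ae_of_all
      intro b
      have hlb : lb t b = t := dif_neg hn
      rw [hlb]
      exact h1
  calc ∫⁻ s in simplex t T (m+n),
        ENNReal.ofReal (opNorm (trprod k₁ k₂ (Fin.snoc s t)) ^ 2)
      ≤ ∫⁻ s in simplex t T (m+n),
          ENNReal.ofReal (opNorm (k₁ (proj1 m n (Fin.snoc s t))) ^ 2) *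
          ENNReal.ofReal (opNorm (k₂ (proj2 m n (Fin.snoc s t))) ^ 2) := by
        apply lintegral_mono
        intro s
        exact ofReal_opNorm_mul_sq_le (k₁ (proj1 m n (Fin.snoc s t)))
          (k₂ (proj2 m n (Fin.snoc s t)))
    _ = ∫⁻ b in simplex t T n, ∫⁻ a in simplex (lb t b) T m,
          ENNReal.ofReal (opNorm (k₁ (proj1 m n (Fin.snoc (Fin.append a b) t))) ^ 2) *
          ENNReal.ofReal (opNorm (k₂ (proj2 m n (Fin.snoc (Fin.append a b) t))) ^ 2) :=
        lintegral_simplex_split m n t T _ (hm1.mul hm2)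
    _ = ∫⁻ b in simplex t T n,
          (∫⁻ a in simplex (lb t b) T m,
            ENNReal.ofReal (opNorm (k₁ (Fin.snoc a (lb t b))) ^ 2)) *
          ENNReal.ofReal (opNorm (k₂ (Fin.snoc b t)) ^ 2) := by
        apply lintegral_congr
        intro b
        rw [← lintegral_mul_const' _ _ ENNReal.ofReal_ne_top]
        apply lintegral_congr
        intro a
        rw [proj1_snoc_append, proj2_snoc_append]
    _ ≤ ∫⁻ b in simplex t T n,
          (vNormE S T k₁) ^ 2 * ENNReal.ofReal (opNorm (k₂ (Fin.snoc b t)) ^ 2) := by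
        apply lintegral_mono_ae
        filter_upwards [haeb] with b hb
        exact mul_le_mul_left hb _
    _ = (vNormE S T k₁) ^ 2 *
          ∫⁻ b in simplex t T n, ENNReal.ofReal (opNorm (k₂ (Fin.snoc b t)) ^ 2) :=
        lintegral_const_mul' _ _ (ENNReal.pow_ne_top hV₁)
    _ ≤ (vNormE S T k₁) ^ 2 * (vNormE S T k₂) ^ 2 := mul_le_mul_right h2 _

set_option maxHeartbeats 1000000 in
lemma l2sqE_trprod_le {d d₁ : ℕ} {m n : ℕ} (S T : ℝ)
    (k : (Fin (m+1) → ℝ) → Matrix (Fin d) (Fin d) ℝ)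
    (f : (Fin (n+1) → ℝ) → Matrix (Fin d) (Fin d₁) ℝ)
    (hk : MMeasurable k) (hf : MMeasurable f) (hV : vNormE S T k ≠ ⊤) :
    l2sqE S T (trprod k f) ≤ (vNormE S T k) ^ 2 * l2sqE S T f := by
  have hae1 : ∀ᵐ u ∂(volume.restrict (Set.Ioo S T)),
      (∫⁻ s in simplex u T m, ENNReal.ofReal (opNorm (k (Fin.snoc s u)) ^ 2))
        ≤ (vNormE S T k) ^ 2 := by
    filter_upwards [ENNReal.ae_le_essSup (μ := volume.restrict (Set.Ioo S T)) (fun u =>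
      (∫⁻ s in simplex u T m, ENNReal.ofReal (opNorm (k (Fin.snoc s u)) ^ 2)) ^ (1/2 : ℝ))]
      with u hu
    exact rpow_half_le hu
  have hC : volume ({u : ℝ | ¬ (∫⁻ s in simplex u T m,
      ENNReal.ofReal (opNorm (k (Fin.snoc s u)) ^ 2)) ≤ (vNormE S T k) ^ 2}
      ∩ Set.Ioo S T) = 0 := by
    have h0 := ae_iff.mp hae1
    rwa [Measure.restrict_apply' measurableSet_Ioo] at h0
  have hm1 : Measurable fun v : Fin (m+n+1) → ℝ =>
      ENNReal.ofReal (opNorm (k (proj1 m n v)) ^ 2) := by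
    apply Measurable.ennreal_ofReal
    apply Measurable.pow_const
    exact measurable_opNorm_comp (fun p q => (hk p q).comp (measurable_proj1 m n))
  have hm2 : Measurable fun v : Fin (m+n+1) → ℝ =>
      ENNReal.ofReal (frobNorm (f (proj2 m n v)) ^ 2) := by
    apply Measurable.ennreal_ofReal
    apply Measurable.pow_const
    exact measurable_frobNorm_comp (fun p q => (hf p q).comp (measurable_proj2 m n))
  have haeb : ∀ᵐ b ∂(volume.restrict (simplex S T (n+1))),
      (∫⁻ a in simplex (lb S b) T m,
        ENNReal.ofReal (opNorm (k (Fin.snoc a (lb S b))) ^ 2)) ≤ (vNormE S T k) ^ 2 := by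
    rw [ae_iff, Measure.restrict_apply' measurableSet_simplex]
    refine measure_mono_null ?_ (null_eval0 (Nat.succ_pos n) S T hC)
    rintro b ⟨hbb, hbs⟩
    refine ⟨?_, hbs⟩
    have hlb : lb S b = b ⟨0, Nat.succ_pos n⟩ := dif_pos (Nat.succ_pos n)
    simp only [Set.mem_setOf_eq] at hbb
    rw [hlb] at hbb
    exact ⟨hbb, (hbs.1 _).1, (hbs.1 _).2⟩
  rw [l2sqE]
  calc ∫⁻ v in simplex S T (m+n+1), ENNReal.ofReal (frobNorm (trprod k f v) ^ 2)
      ≤ ∫⁻ v in simplex S T (m+n+1),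
          ENNReal.ofReal (opNorm (k (proj1 m n v)) ^ 2) *
          ENNReal.ofReal (frobNorm (f (proj2 m n v)) ^ 2) := by
        apply lintegral_mono
        intro v
        exact ofReal_frob_mul_sq_le (k (proj1 m n v)) (f (proj2 m n v))
    _ = ∫⁻ b in simplex S T (n+1), ∫⁻ a in simplex (lb S b) T m,
          ENNReal.ofReal (opNorm (k (proj1 m n (Fin.append a b : Fin (m+(n+1)) → ℝ))) ^ 2) *
          ENNReal.ofReal (frobNorm (f (proj2 m n (Fin.append a b : Fin (m+(n+1)) → ℝ))) ^ 2) :=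
        lintegral_simplex_split m (n+1) S T _ (hm1.mul hm2)
    _ = ∫⁻ b in simplex S T (n+1),
          (∫⁻ a in simplex (lb S b) T m,
            ENNReal.ofReal (opNorm (k (Fin.snoc a (lb S b))) ^ 2)) *
          ENNReal.ofReal (frobNorm (f b) ^ 2) := by
        apply lintegral_congr
        intro b
        rw [← lintegral_mul_const' _ _ ENNReal.ofReal_ne_top]
        apply lintegral_congr
        intro a
        rw [proj1_append S, proj2_append]
    _ ≤ ∫⁻ b in simplex S T (n+1),
          (vNormE S T k) ^ 2 * ENNReal.ofReal (frobNorm (f b) ^ 2) := by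
        apply lintegral_mono_ae
        filter_upwards [haeb] with b hb
        exact mul_le_mul_left hb _
    _ = (vNormE S T k) ^ 2 * ∫⁻ b in simplex S T (n+1),
          ENNReal.ofReal (frobNorm (f b) ^ 2) :=
        lintegral_const_mul' _ _ (ENNReal.pow_ne_top hV)
    _ = (vNormE S T k) ^ 2 * l2sqE S T f := rfl

/-- (i) The ▷-product of Volterra kernels is a Volterra kernel, with
`⦀k₁ ▷ k₂⦀ ≤ ⦀k₁⦀ ⦀k₂⦀`.  (ii) The ▷-product of a Volterra kernel with an L² kernel
is an L² kernel, with `‖k ▷ f‖ ≤ ⦀k⦀ ‖f‖`. -/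
theorem stmt2 (S T : ℝ) (hS : 0 ≤ S) (hST : S < T) (d d₁ : ℕ) (hd : 0 < d) (hd₁ : 0 < d₁)
    (m n : ℕ) :
    (∀ (k₁ : (Fin (m+1) → ℝ) → Matrix (Fin d) (Fin d) ℝ)
       (k₂ : (Fin (n+1) → ℝ) → Matrix (Fin d) (Fin d) ℝ),
       MemV S T k₁ → MemV S T k₂ →
       MemV S T (trprod k₁ k₂) ∧
         vNorm S T (trprod k₁ k₂) ≤ vNorm S T k₁ * vNorm S T k₂) ∧
    (∀ (k : (Fin (m+1) → ℝ) → Matrix (Fin d) (Fin d) ℝ)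
       (f : (Fin (n+1) → ℝ) → Matrix (Fin d) (Fin d₁) ℝ),
       MemV S T k → MemL2 S T f →
       MemL2 S T (trprod k f) ∧
         l2Norm S T (trprod k f) ≤ vNorm S T k * l2Norm S T f) := by
  constructor
  · intro k₁ k₂ h₁ h₂
    have hle := vNormE_trprod_le S T k₁ k₂ h₁.1 h₂.1 h₁.2.ne
    have hne : vNormE S T k₁ * vNormE S T k₂ ≠ ⊤ := ENNReal.mul_ne_top h₁.2.ne h₂.2.ne
    refine ⟨⟨MMeasurable_trprod h₁.1 h₂.1, lt_of_le_of_lt hle (lt_top_iff_ne_top.2 hne)⟩, ?_⟩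
    unfold vNorm
    rw [← ENNReal.toReal_mul]
    exact ENNReal.toReal_mono hne hle
  · intro k f hk hf
    have hle := l2sqE_trprod_le S T k f hk.1 hf.1 hk.2.ne
    have hmulne : (vNormE S T k) ^ 2 * l2sqE S T f ≠ ⊤ :=
      ENNReal.mul_ne_top (ENNReal.pow_ne_top hk.2.ne) hf.2.ne
    refine ⟨⟨MMeasurable_trprod hk.1 hf.1, lt_of_le_of_lt hle (lt_top_iff_ne_top.2 hmulne)⟩, ?_⟩
    unfold l2Norm vNorm
    have hstep : (l2sqE S T (trprod k f)) ^ (1/2:ℝ)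
        ≤ vNormE S T k * (l2sqE S T f) ^ (1/2:ℝ) := by
      calc (l2sqE S T (trprod k f)) ^ (1/2:ℝ)
          ≤ ((vNormE S T k) ^ 2 * l2sqE S T f) ^ (1/2:ℝ) :=
            ENNReal.rpow_le_rpow hle (by norm_num)
        _ = ((vNormE S T k) ^ 2) ^ (1/2:ℝ) * (l2sqE S T f) ^ (1/2:ℝ) :=
            ENNReal.mul_rpow_of_nonneg _ _ (by norm_num)
        _ = vNormE S T k * (l2sqE S T f) ^ (1/2:ℝ) := by rw [sq_rpow_half]
    have hne2 : vNormE S T k * (l2sqE S T f) ^ (1/2:ℝ) ≠ ⊤ :=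
      ENNReal.mul_ne_top hk.2.ne (ENNReal.rpow_ne_top_of_nonneg (by norm_num) hf.2.ne)
    calc (l2sqE S T (trprod k f) ^ (1/2:ℝ)).toReal
        ≤ (vNormE S T k * (l2sqE S T f) ^ (1/2:ℝ)).toReal := ENNReal.toReal_mono hne2 hstep
      _ = (vNormE S T k).toReal * ((l2sqE S T f) ^ (1/2:ℝ)).toReal := ENNReal.toReal_mul
end
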